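/- arXiv:1907.01270 — 3 statements merged into one kernel-verified Lean document; each statement's English description precedes it below -/
import Mathlib

section
/- For every instance of the rule (□_R^1) of LNS_Kt, i.e., with conclusion G ⇗ Γ ⇒ Δ ↙ Σ ⇒ Π,□A and premisses G ⇗ Γ ⇒ Δ,A ↙ Σ ⇒ Π,□A and G ⇗ Γ ⇒ Δ ↙ Σ ⇒ Π,□A ↗ ε ⇒ A (where G is a possibly empty context, ⇗ stands for either ↗ or ↙, and ε is the empty multiset): if the conclusion is falsifiable, then at least one of the two premisses is falsifiable. -/
/-- Formulae of tense logic: atoms (indexed by naturals), ⊥, →, □, ◇, ■, ◆. -/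
inductive Formula : Type
  | atom : ℕ → Formula
  | bot : Formula
  | imp : Formula → Formula → Formula
  | box : Formula → Formula
  | dia : Formula → Formula
  | bbox : Formula → Formula
  | bdia : Formula → Formula

def Formula.neg (A : Formula) : Formula := A.imp .bot
def Formula.and (A B : Formula) : Formula := (A.imp B.neg).neg
def Formula.or (A B : Formula) : Formula := A.neg.imp B
def Formula.top : Formula := Formula.bot.imp .bot

/-- Formulas built from atoms, ⊥, →, □, ■ only (no diamonds). -/
def Formula.NoDia : Formula → Prop
  | .atom _ => True
  | .bot => True
  | .imp A B => A.NoDia ∧ B.NoDia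
  | .box A => A.NoDia
  | .dia _ => False
  | .bbox A => A.NoDia
  | .bdia _ => False

/-- Structural connectives: `up` is ↗ and `dn` is ↙. -/
inductive Dir : Type
  | up
  | dn

/-- Linear nested sequents: a nonempty list of components `Γ ⇒ Δ`
joined by the structural connectives ↗ (`up`) and ↙ (`dn`). -/
inductive LNS : Type
  | single (Γ Δ : Multiset Formula) : LNS
  | up (Γ Δ : Multiset Formula) (S : LNS) : LNS
  | dn (Γ Δ : Multiset Formula) (S : LNS) : LNS

/-- A (possibly empty) context: a list of components, each together with the
structural connective joining it to what follows. -/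
abbrev Ctx := List (Multiset Formula × Multiset Formula × Dir)

/-- `plug G S` is the linear nested sequent `G ⇗ S` (just `S` when `G` is empty). -/
def plug : Ctx → LNS → LNS
  | [], S => S
  | (Γ, Δ, Dir.up) :: G, S => LNS.up Γ Δ (plug G S)
  | (Γ, Δ, Dir.dn) :: G, S => LNS.dn Γ Δ (plug G S)

/-- The structural connective joining the context to what follows it (none if empty). -/
def lastDir : Ctx → Option Dir
  | [] => none
  | [(_, _, d)] => some d
  | _ :: G => lastDir G

/-- Kripke forcing for tense logic. -/
def Force {W : Type} (R : W → W → Prop) (V : W → ℕ → Prop) : W → Formula → Prop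
  | w, .atom p => V w p
  | _, .bot => False
  | w, .imp A B => Force R V w A → Force R V w B
  | w, .box A => ∀ v, R w v → Force R V v A
  | w, .dia A => ∃ v, R w v ∧ Force R V v A
  | w, .bbox A => ∀ v, R v w → Force R V v A
  | w, .bdia A => ∃ v, R v w ∧ Force R V v A

/-- Conjunction of a finite multiset of formulae (empty conjunction is ⊤). -/
noncomputable def bigAnd (Γ : Multiset Formula) : Formula :=
  Γ.toList.foldr Formula.and Formula.top

/-- Disjunction of a finite multiset of formulae (empty disjunction is ⊥). -/
noncomputable def bigOr (Δ : Multiset Formula) : Formula :=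
  Δ.toList.foldr Formula.or Formula.bot

/-- The formula translation τ of a linear nested sequent. -/
noncomputable def tau : LNS → Formula
  | .single Γ Δ => (bigAnd Γ).imp (bigOr Δ)
  | .up Γ Δ S => (bigAnd Γ).imp ((bigOr Δ).or (tau S).box)
  | .dn Γ Δ S => (bigAnd Γ).imp ((bigOr Δ).or (tau S).bbox)

/-- A formula is valid if it is forced at every world of every Kripke model. -/
def Valid (A : Formula) : Prop :=
  ∀ (W : Type) (_ : Nonempty W) (R : W → W → Prop) (V : W → ℕ → Prop) (w : W),
    Force R V w A

/-- A linear nested sequent is falsifiable if its formula translation fails at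
some world of some Kripke model. -/
def Falsifiable (S : LNS) : Prop :=
  ∃ (W : Type) (_ : Nonempty W) (R : W → W → Prop) (V : W → ℕ → Prop) (w : W),
    ¬ Force R V w (tau S)

section Aux

variable {W : Type} {R : W → W → Prop} {V : W → ℕ → Prop}

lemma force_or {w : W} {A B : Formula} :
    Force R V w (A.or B) ↔ Force R V w A ∨ Force R V w B := by
  simp only [Formula.or, Formula.neg, Force]
  tauto

lemma force_imp {w : W} {A B : Formula} :
    Force R V w (A.imp B) ↔ (Force R V w A → Force R V w B) := Iff.rfl

lemma force_box {w : W} {A : Formula} :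
    Force R V w A.box ↔ ∀ v, R w v → Force R V v A := Iff.rfl

lemma force_bbox {w : W} {A : Formula} :
    Force R V w A.bbox ↔ ∀ v, R v w → Force R V v A := Iff.rfl

lemma force_top {w : W} : Force R V w Formula.top := by
  simp [Formula.top, Force]

lemma force_foldr_or {w : W} (l : List Formula) :
    Force R V w (l.foldr Formula.or .bot) ↔ ∃ B ∈ l, Force R V w B := by
  induction l with
  | nil => simp [Force]
  | cons a l ih => simp [force_or, ih]

lemma force_bigOr {w : W} {Δ : Multiset Formula} :
    Force R V w (bigOr Δ) ↔ ∃ B ∈ Δ, Force R V w B := by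
  rw [bigOr, force_foldr_or]; simp

lemma plug_mono (S S' : LNS)
    (h : ∀ w : W, ¬ Force R V w (tau S) → ¬ Force R V w (tau S')) :
    ∀ (G : Ctx) (w : W),
      ¬ Force R V w (tau (plug G S)) → ¬ Force R V w (tau (plug G S')) := by
  intro G
  induction G with
  | nil => exact h
  | cons x G ih =>
    obtain ⟨Γ, Δ, d⟩ := x
    cases d <;>
    · intro w hw
      simp only [plug, tau, force_imp, force_or, force_box, force_bbox] at hw ⊢
      push_neg at hw ⊢
      obtain ⟨hΓ, hΔ, v, hv, hS⟩ := hw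
      exact ⟨hΓ, hΔ, v, hv, ih v hS⟩

lemma core (Γ Δ Θ Λ : Multiset Formula) (A : Formula) (w : W)
    (hw : ¬ Force R V w (tau (.dn Γ Δ (.single Θ (A.box ::ₘ Λ))))) :
    ¬ Force R V w (tau (.dn Γ Δ (.up Θ (A.box ::ₘ Λ) (.single 0 {A})))) := by
  simp only [tau, force_imp, force_or, force_box, force_bbox] at hw ⊢
  push_neg at hw ⊢
  obtain ⟨hΓ, hΔ, u, hu, hfu⟩ := hw
  obtain ⟨hΘ, hbl⟩ := hfu
  have h3 : ¬ Force R V u (bigOr (A.box ::ₘ Λ)) := hbl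
  have hboxA : ¬ Force R V u A.box := fun h =>
    h3 (force_bigOr.mpr ⟨A.box, Multiset.mem_cons_self _ _, h⟩)
  rw [force_box] at hboxA
  push_neg at hboxA
  obtain ⟨v, huv, hvA⟩ := hboxA
  refine ⟨hΓ, hΔ, u, hu, hΘ, h3, v, huv, (by simp [bigAnd, Formula.top, Force] : Force R V v (bigAnd 0)), ?_⟩
  intro hA
  rw [force_bigOr] at hA
  obtain ⟨B, hB, hFB⟩ := hA
  rw [Multiset.mem_singleton] at hB
  subst hB
  exact hvA hFB

end Aux

/-- Soundness of the rule (□_R^1): if the conclusion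
`G ⇗ Γ ⇒ Δ ↙ Θ ⇒ Λ,□A` is falsifiable, then one of the premisses
`G ⇗ Γ ⇒ Δ,A ↙ Θ ⇒ Λ,□A` and `G ⇗ Γ ⇒ Δ ↙ Θ ⇒ Λ,□A ↗ ε ⇒ A` is falsifiable. -/
theorem boxR1_sound (G : Ctx) (Γ Δ Θ Λ : Multiset Formula) (A : Formula)
    (h : Falsifiable (plug G (.dn Γ Δ (.single Θ (A.box ::ₘ Λ))))) :
    Falsifiable (plug G (.dn Γ (A ::ₘ Δ) (.single Θ (A.box ::ₘ Λ)))) ∨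
      Falsifiable (plug G (.dn Γ Δ (.up Θ (A.box ::ₘ Λ) (.single 0 {A})))) := by
  obtain ⟨W, hW, R, V, w, hw⟩ := h
  right
  exact ⟨W, hW, R, V, w, plug_mono _ _ (core Γ Δ Θ Λ A) G w hw⟩
end

section
/- Every linear nested sequent derivable in LNS_Kt is derivable in LNS_Kt*; consequently, if LNS_Kt is cut-free complete for the tense logic Kt (i.e., every valid formula φ built from atoms, ⊥, →, □, ■ has a derivable sequent ε ⇒ φ), then so is LNS_Kt*. -/
/-- The calculus LNS_Kt. -/
inductive Deriv : LNS → Prop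
  | id (G : Ctx) (Γ Δ : Multiset Formula) (p : ℕ) :
      Deriv (plug G (.single (.atom p ::ₘ Γ) (.atom p ::ₘ Δ)))
  | botL (G : Ctx) (Γ Δ : Multiset Formula) :
      Deriv (plug G (.single (.bot ::ₘ Γ) Δ))
  | ew (G : Ctx) (Θ Λ : Multiset Formula) (d : Dir) (Γ Δ : Multiset Formula) :
      Deriv (plug G (.single Θ Λ)) →
      Deriv (plug (G ++ [(Θ, Λ, d)]) (.single Γ Δ))
  | impR (G : Ctx) (Γ Δ : Multiset Formula) (A B : Formula) :
      Deriv (plug G (.single (A ::ₘ Γ) (B ::ₘ A.imp B ::ₘ Δ))) →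
      Deriv (plug G (.single Γ (A.imp B ::ₘ Δ)))
  | impL (G : Ctx) (Γ Δ : Multiset Formula) (A B : Formula) :
      Deriv (plug G (.single (B ::ₘ A.imp B ::ₘ Γ) Δ)) →
      Deriv (plug G (.single (A.imp B ::ₘ Γ) (A ::ₘ Δ))) →
      Deriv (plug G (.single (A.imp B ::ₘ Γ) Δ))
  | boxR1 (G : Ctx) (Γ Δ Θ Λ : Multiset Formula) (A : Formula) :
      Deriv (plug G (.dn Γ (A ::ₘ Δ) (.single Θ (A.box ::ₘ Λ)))) →
      Deriv (plug G (.dn Γ Δ (.up Θ (A.box ::ₘ Λ) (.single 0 {A})))) →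
      Deriv (plug G (.dn Γ Δ (.single Θ (A.box ::ₘ Λ))))
  | bboxR1 (G : Ctx) (Γ Δ Θ Λ : Multiset Formula) (A : Formula) :
      Deriv (plug G (.up Γ (A ::ₘ Δ) (.single Θ (A.bbox ::ₘ Λ)))) →
      Deriv (plug G (.up Γ Δ (.dn Θ (A.bbox ::ₘ Λ) (.single 0 {A})))) →
      Deriv (plug G (.up Γ Δ (.single Θ (A.bbox ::ₘ Λ))))
  | boxR2 (G : Ctx) (Γ Δ : Multiset Formula) (A : Formula) :
      lastDir G ≠ some Dir.dn →
      Deriv (plug G (.up Γ (A.box ::ₘ Δ) (.single 0 {A}))) →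
      Deriv (plug G (.single Γ (A.box ::ₘ Δ)))
  | bboxR2 (G : Ctx) (Γ Δ : Multiset Formula) (A : Formula) :
      lastDir G ≠ some Dir.up →
      Deriv (plug G (.dn Γ (A.bbox ::ₘ Δ) (.single 0 {A}))) →
      Deriv (plug G (.single Γ (A.bbox ::ₘ Δ)))
  | boxL1 (G : Ctx) (Γ Δ Θ Λ : Multiset Formula) (A : Formula) :
      Deriv (plug G (.up (A.box ::ₘ Γ) Δ (.single (A ::ₘ Θ) Λ))) →
      Deriv (plug G (.up (A.box ::ₘ Γ) Δ (.single Θ Λ)))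
  | bboxL1 (G : Ctx) (Γ Δ Θ Λ : Multiset Formula) (A : Formula) :
      Deriv (plug G (.dn (A.bbox ::ₘ Γ) Δ (.single (A ::ₘ Θ) Λ))) →
      Deriv (plug G (.dn (A.bbox ::ₘ Γ) Δ (.single Θ Λ)))
  | boxL2 (G : Ctx) (Γ Δ Θ Λ : Multiset Formula) (A : Formula) :
      Deriv (plug G (.single (A ::ₘ Γ) Δ)) →
      Deriv (plug G (.dn Γ Δ (.single (A.box ::ₘ Θ) Λ)))
  | bboxL2 (G : Ctx) (Γ Δ Θ Λ : Multiset Formula) (A : Formula) :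
      Deriv (plug G (.single (A ::ₘ Γ) Δ)) →
      Deriv (plug G (.up Γ Δ (.single (A.bbox ::ₘ Θ) Λ)))

/-- The simplified calculus LNS_Kt*. -/
inductive DerivStar : LNS → Prop
  | id (G : Ctx) (Γ Δ : Multiset Formula) (p : ℕ) :
      DerivStar (plug G (.single (.atom p ::ₘ Γ) (.atom p ::ₘ Δ)))
  | botL (G : Ctx) (Γ Δ : Multiset Formula) :
      DerivStar (plug G (.single (.bot ::ₘ Γ) Δ))
  | ew (G : Ctx) (Θ Λ : Multiset Formula) (d : Dir) (Γ Δ : Multiset Formula) :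
      DerivStar (plug G (.single Θ Λ)) →
      DerivStar (plug (G ++ [(Θ, Λ, d)]) (.single Γ Δ))
  | impR (G : Ctx) (Γ Δ : Multiset Formula) (A B : Formula) :
      DerivStar (plug G (.single (A ::ₘ Γ) (B ::ₘ A.imp B ::ₘ Δ))) →
      DerivStar (plug G (.single Γ (A.imp B ::ₘ Δ)))
  | impL (G : Ctx) (Γ Δ : Multiset Formula) (A B : Formula) :
      DerivStar (plug G (.single (B ::ₘ A.imp B ::ₘ Γ) Δ)) →
      DerivStar (plug G (.single (A.imp B ::ₘ Γ) (A ::ₘ Δ))) →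
      DerivStar (plug G (.single (A.imp B ::ₘ Γ) Δ))
  | boxR (G : Ctx) (Γ Δ : Multiset Formula) (A : Formula) :
      DerivStar (plug G (.up Γ (A.box ::ₘ Δ) (.single 0 {A}))) →
      DerivStar (plug G (.single Γ (A.box ::ₘ Δ)))
  | bboxR (G : Ctx) (Γ Δ : Multiset Formula) (A : Formula) :
      DerivStar (plug G (.dn Γ (A.bbox ::ₘ Δ) (.single 0 {A}))) →
      DerivStar (plug G (.single Γ (A.bbox ::ₘ Δ)))
  | boxL1 (G : Ctx) (Γ Δ Θ Λ : Multiset Formula) (A : Formula) :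
      DerivStar (plug G (.up (A.box ::ₘ Γ) Δ (.single (A ::ₘ Θ) Λ))) →
      DerivStar (plug G (.up (A.box ::ₘ Γ) Δ (.single Θ Λ)))
  | bboxL1 (G : Ctx) (Γ Δ Θ Λ : Multiset Formula) (A : Formula) :
      DerivStar (plug G (.dn (A.bbox ::ₘ Γ) Δ (.single (A ::ₘ Θ) Λ))) →
      DerivStar (plug G (.dn (A.bbox ::ₘ Γ) Δ (.single Θ Λ)))
  | boxL2 (G : Ctx) (Γ Δ Θ Λ : Multiset Formula) (A : Formula) :
      DerivStar (plug G (.single (A ::ₘ Γ) Δ)) →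
      DerivStar (plug G (.dn Γ Δ (.single (A.box ::ₘ Θ) Λ)))
  | bboxL2 (G : Ctx) (Γ Δ Θ Λ : Multiset Formula) (A : Formula) :
      DerivStar (plug G (.single (A ::ₘ Γ) Δ)) →
      DerivStar (plug G (.up Γ Δ (.single (A.bbox ::ₘ Θ) Λ)))

lemma plug_append_dn (G : Ctx) (Γ Δ : Multiset Formula) (S : LNS) :
    plug (G ++ [(Γ, Δ, Dir.dn)]) S = plug G (LNS.dn Γ Δ S) := by
  induction G with
  | nil => rfl
  | cons h t ih =>
    obtain ⟨a, b, d⟩ := h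
    cases d <;> simp [plug, ih]

lemma plug_append_up (G : Ctx) (Γ Δ : Multiset Formula) (S : LNS) :
    plug (G ++ [(Γ, Δ, Dir.up)]) S = plug G (LNS.up Γ Δ S) := by
  induction G with
  | nil => rfl
  | cons h t ih =>
    obtain ⟨a, b, d⟩ := h
    cases d <;> simp [plug, ih]

/-- Every sequent derivable in LNS_Kt is derivable in LNS_Kt*; hence if LNS_Kt
is cut-free complete for Kt, then so is LNS_Kt*. -/
theorem lnskt_to_star :
    (∀ S : LNS, Deriv S → DerivStar S) ∧
    ((∀ φ : Formula, φ.NoDia → Valid φ → Deriv (LNS.single 0 {φ})) →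
      (∀ φ : Formula, φ.NoDia → Valid φ → DerivStar (LNS.single 0 {φ}))) := by

  have main : ∀ S : LNS, Deriv S → DerivStar S := by
    intro S h
    induction h with
    | id G Γ Δ p => exact DerivStar.id G Γ Δ p
    | botL G Γ Δ => exact DerivStar.botL G Γ Δ
    | ew G Θ Λ d Γ Δ _ ih => exact DerivStar.ew G Θ Λ d Γ Δ ih
    | impR G Γ Δ A B _ ih => exact DerivStar.impR G Γ Δ A B ih
    | impL G Γ Δ A B _ _ ih1 ih2 => exact DerivStar.impL G Γ Δ A B ih1 ih2
    | boxR1 G Γ Δ Θ Λ A _ _ _ ih2 =>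
      have := DerivStar.boxR (G ++ [(Γ, Δ, Dir.dn)]) Θ Λ A
        (by rwa [plug_append_dn])
      rwa [plug_append_dn] at this
    | bboxR1 G Γ Δ Θ Λ A _ _ _ ih2 =>
      have := DerivStar.bboxR (G ++ [(Γ, Δ, Dir.up)]) Θ Λ A
        (by rwa [plug_append_up])
      rwa [plug_append_up] at this
    | boxR2 G Γ Δ A _ _ ih => exact DerivStar.boxR G Γ Δ A ih
    | bboxR2 G Γ Δ A _ _ ih => exact DerivStar.bboxR G Γ Δ A ih
    | boxL1 G Γ Δ Θ Λ A _ ih => exact DerivStar.boxL1 G Γ Δ Θ Λ A ih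
    | bboxL1 G Γ Δ Θ Λ A _ ih => exact DerivStar.bboxL1 G Γ Δ Θ Λ A ih
    | boxL2 G Γ Δ Θ Λ A _ ih => exact DerivStar.boxL2 G Γ Δ Θ Λ A ih
    | bboxL2 G Γ Δ Θ Λ A _ ih => exact DerivStar.bboxL2 G Γ Δ Θ Λ A ih
  exact ⟨main, fun h φ hnd hv => main _ (h φ hnd hv)⟩
end

section
/- (Cut-free completeness of LNS_Kt) For every formula φ built from atoms, ⊥, →, □, ■: if φ is valid (forced at every world of every Kripke model), then the linear nested sequent ε ⇒ φ is derivable in LNS_Kt. -/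
/-! ### Infrastructure for the completeness proof -/

deriving instance DecidableEq for Formula
deriving instance DecidableEq for Dir

/-- Modal depth of a formula. -/
def mdepth : Formula → ℕ
  | .atom _ => 0
  | .bot => 0
  | .imp A B => max (mdepth A) (mdepth B)
  | .box A => mdepth A + 1
  | .dia A => mdepth A + 1
  | .bbox A => mdepth A + 1
  | .bdia A => mdepth A + 1

/-- Subformula closure. -/
def scl : Formula → Finset Formula
  | .atom p => {.atom p}
  | .bot => {.bot}
  | .imp A B => insert (.imp A B) (scl A ∪ scl B)
  | .box A => insert (.box A) (scl A)
  | .dia A => insert (.dia A) (scl A)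
  | .bbox A => insert (.bbox A) (scl A)
  | .bdia A => insert (.bdia A) (scl A)

lemma mem_scl_self (A : Formula) : A ∈ scl A := by
  cases A <;> simp [scl]

lemma scl_trans : ∀ A B : Formula, B ∈ scl A → scl B ⊆ scl A := by
  intro A
  induction A with
  | atom p => intro B hB; simp [scl] at hB; subst hB; exact fun x hx => hx
  | bot => intro B hB; simp [scl] at hB; subst hB; exact fun x hx => hx
  | imp A₁ A₂ ih1 ih2 =>
      intro B hB
      simp only [scl, Finset.mem_insert, Finset.mem_union] at hB
      rcases hB with h | h | h
      · subst h; exact fun x hx => hx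
      · exact (ih1 B h).trans (by intro x hx; simp [scl]; right; left; exact hx)
      · exact (ih2 B h).trans (by intro x hx; simp [scl]; right; right; exact hx)
  | box A ih =>
      intro B hB
      simp only [scl, Finset.mem_insert] at hB
      rcases hB with h | h
      · subst h; exact fun x hx => hx
      · exact (ih B h).trans (by intro x hx; simp [scl]; right; exact hx)
  | dia A ih =>
      intro B hB
      simp only [scl, Finset.mem_insert] at hB
      rcases hB with h | h
      · subst h; exact fun x hx => hx
      · exact (ih B h).trans (by intro x hx; simp [scl]; right; exact hx)
  | bbox A ih =>
      intro B hB
      simp only [scl, Finset.mem_insert] at hB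
      rcases hB with h | h
      · subst h; exact fun x hx => hx
      · exact (ih B h).trans (by intro x hx; simp [scl]; right; exact hx)
  | bdia A ih =>
      intro B hB
      simp only [scl, Finset.mem_insert] at hB
      rcases hB with h | h
      · subst h; exact fun x hx => hx
      · exact (ih B h).trans (by intro x hx; simp [scl]; right; exact hx)

/-- Closure property of a set of formulas. -/
structure SC (CL : Finset Formula) : Prop where
  impC : ∀ A B : Formula, Formula.imp A B ∈ CL → A ∈ CL ∧ B ∈ CL
  boxC : ∀ A : Formula, Formula.box A ∈ CL → A ∈ CL
  bboxC : ∀ A : Formula, Formula.bbox A ∈ CL → A ∈ CL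

lemma sc_scl (φ : Formula) : SC (scl φ) := by
  constructor
  · intro A B h
    have h2 := scl_trans φ _ h
    constructor
    · exact h2 (by simp [scl]; right; left; exact mem_scl_self A)
    · exact h2 (by simp [scl]; right; right; exact mem_scl_self B)
  · intro A h
    exact scl_trans φ _ h (by simp [scl]; right; exact mem_scl_self A)
  · intro A h
    exact scl_trans φ _ h (by simp [scl]; right; exact mem_scl_self A)

lemma noDia_scl : ∀ A : Formula, A.NoDia → ∀ B ∈ scl A, B.NoDia := by
  intro A
  induction A with
  | atom p => intro h B hB; simp [scl] at hB; subst hB; trivial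
  | bot => intro h B hB; simp [scl] at hB; subst hB; trivial
  | imp A₁ A₂ ih1 ih2 =>
      intro h B hB
      simp only [scl, Finset.mem_insert, Finset.mem_union] at hB
      rcases hB with h' | h' | h'
      · subst h'; exact h
      · exact ih1 h.1 B h'
      · exact ih2 h.2 B h'
  | box A ih =>
      intro h B hB
      simp only [scl, Finset.mem_insert] at hB
      rcases hB with h' | h'
      · subst h'; exact h
      · exact ih h B h'
  | dia A ih => intro h; exact absurd h (by simp [Formula.NoDia])
  | bbox A ih =>
      intro h B hB
      simp only [scl, Finset.mem_insert] at hB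
      rcases hB with h' | h'
      · subst h'; exact h
      · exact ih h B h'
  | bdia A ih => intro h; exact absurd h (by simp [Formula.NoDia])

lemma mdepth_scl : ∀ A : Formula, ∀ B ∈ scl A, mdepth B ≤ mdepth A := by
  intro A
  induction A with
  | atom p => intro B hB; simp [scl] at hB; subst hB; exact le_refl _
  | bot => intro B hB; simp [scl] at hB; subst hB; exact le_refl _
  | imp A₁ A₂ ih1 ih2 =>
      intro B hB
      simp only [scl, Finset.mem_insert, Finset.mem_union] at hB
      rcases hB with h' | h' | h'
      · subst h'; exact le_refl _
      · exact le_trans (ih1 B h') (by simp [mdepth])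
      · exact le_trans (ih2 B h') (by simp [mdepth])
  | box A ih =>
      intro B hB
      simp only [scl, Finset.mem_insert] at hB
      rcases hB with h' | h'
      · subst h'; exact le_refl _
      · exact le_trans (ih B h') (by simp [mdepth])
  | dia A ih =>
      intro B hB
      simp only [scl, Finset.mem_insert] at hB
      rcases hB with h' | h'
      · subst h'; exact le_refl _
      · exact le_trans (ih B h') (by simp [mdepth])
  | bbox A ih =>
      intro B hB
      simp only [scl, Finset.mem_insert] at hB
      rcases hB with h' | h'
      · subst h'; exact le_refl _
      · exact le_trans (ih B h') (by simp [mdepth])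
  | bdia A ih =>
      intro B hB
      simp only [scl, Finset.mem_insert] at hB
      rcases hB with h' | h'
      · subst h'; exact le_refl _
      · exact le_trans (ih B h') (by simp [mdepth])

/-! ### Context lemmas -/

lemma plug_append (G₁ G₂ : Ctx) (S : LNS) :
    plug (G₁ ++ G₂) S = plug G₁ (plug G₂ S) := by
  induction G₁ with
  | nil => rfl
  | cons a G ih =>
      rcases a with ⟨Γ, Δ, d⟩
      cases d <;> simp [plug, ih]

lemma plug_up (G : Ctx) (P Q : Multiset Formula) (S : LNS) :
    plug (G ++ [(P, Q, Dir.up)]) S = plug G (.up P Q S) := by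
  rw [plug_append]; rfl

lemma plug_dn (G : Ctx) (P Q : Multiset Formula) (S : LNS) :
    plug (G ++ [(P, Q, Dir.dn)]) S = plug G (.dn P Q S) := by
  rw [plug_append]; rfl

lemma lastDir_concat (G : Ctx) (x : Multiset Formula × Multiset Formula × Dir) :
    lastDir (G ++ [x]) = some x.2.2 := by
  induction G with
  | nil => rcases x with ⟨a, b, d⟩; rfl
  | cons h t ih =>
      cases t with
      | nil => exact ih
      | cons h' t' => exact ih

lemma not_deriv_pop {G : Ctx} {Θ Λ Γ Δ : Multiset Formula} {d : Dir}
    (h : ¬ Deriv (plug (G ++ [(Θ, Λ, d)]) (.single Γ Δ))) :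
    ¬ Deriv (plug G (.single Θ Λ)) :=
  fun hD => h (Deriv.ew G Θ Λ d Γ Δ hD)



/-! ### Saturated labelled trees and the countermodel -/

/-- A finitely branching tree whose nodes are labelled with components. -/
inductive KTree : Type
  | node (X Y : Multiset Formula) (cs : List (Dir × KTree)) : KTree

def rootX : KTree → Multiset Formula
  | .node X _ _ => X

def rootY : KTree → Multiset Formula
  | .node _ Y _ => Y

def rootCs : KTree → List (Dir × KTree)
  | .node _ _ cs => cs

/-- Subtree at a given path. -/
def subt : List ℕ → KTree → Option KTree
  | [], t => some t
  | k :: l, .node _ _ cs => (cs[k]?).bind fun p => subt l p.2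

@[simp] lemma subt_nil (t : KTree) : subt [] t = some t := rfl

lemma subt_cons (k : ℕ) (l : List ℕ) (X Y : Multiset Formula) (cs : List (Dir × KTree)) :
    subt (k :: l) (.node X Y cs) = (cs[k]?).bind fun p => subt l p.2 := rfl

lemma subt_append (l₁ l₂ : List ℕ) (t : KTree) :
    subt (l₁ ++ l₂) t = (subt l₁ t).bind (subt l₂) := by
  induction l₁ generalizing t with
  | nil => rfl
  | cons k l ih =>
      rcases t with ⟨X, Y, cs⟩
      rw [List.cons_append, subt_cons, subt_cons]
      rcases h : cs[k]? with _ | ⟨d, c⟩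
      · simp
      · simp only [Option.bind_some]
        exact ih c

/-- Local saturation conditions of a node, relative to the (optional) parent
information `pi = some (d, P, Q)`: `d` is the direction by which this node is
attached to its parent, and `P ⇒ Q` is the parent's component. -/
structure NodeOK (pi : Option (Dir × Multiset Formula × Multiset Formula))
    (X Y : Multiset Formula) (cs : List (Dir × KTree)) : Prop where
  nobot : Formula.bot ∉ X
  noid : ∀ p : ℕ, Formula.atom p ∈ X → Formula.atom p ∉ Y
  nodia : ∀ A : Formula, A ∈ X ∨ A ∈ Y → A.NoDia
  impX : ∀ A B : Formula, Formula.imp A B ∈ X → B ∈ X ∨ A ∈ Y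
  impY : ∀ A B : Formula, Formula.imp A B ∈ Y → A ∈ X ∧ B ∈ Y
  boxX₁ : ∀ (A : Formula) (k : ℕ) (c : KTree),
      Formula.box A ∈ X → cs[k]? = some (Dir.up, c) → A ∈ rootX c
  boxX₂ : ∀ (A : Formula) (P Q : Multiset Formula),
      Formula.box A ∈ X → pi = some (Dir.dn, P, Q) → A ∈ P
  bboxX₁ : ∀ (A : Formula) (k : ℕ) (c : KTree),
      Formula.bbox A ∈ X → cs[k]? = some (Dir.dn, c) → A ∈ rootX c
  bboxX₂ : ∀ (A : Formula) (P Q : Multiset Formula),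
      Formula.bbox A ∈ X → pi = some (Dir.up, P, Q) → A ∈ P
  boxY : ∀ A : Formula, Formula.box A ∈ Y →
      (∃ (k : ℕ) (c : KTree), cs[k]? = some (Dir.up, c) ∧ A ∈ rootY c) ∨
      (∃ P Q : Multiset Formula, pi = some (Dir.dn, P, Q) ∧ A ∈ Q)
  bboxY : ∀ A : Formula, Formula.bbox A ∈ Y →
      (∃ (k : ℕ) (c : KTree), cs[k]? = some (Dir.dn, c) ∧ A ∈ rootY c) ∨
      (∃ P Q : Multiset Formula, pi = some (Dir.up, P, Q) ∧ A ∈ Q)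

/-- Global saturation of a tree, relative to parent information for the root. -/
def GoodR (pi : Option (Dir × Multiset Formula × Multiset Formula)) (t : KTree) : Prop :=
  (∀ X Y cs, t = .node X Y cs → NodeOK pi X Y cs) ∧
  (∀ (l : List ℕ) (k : ℕ) (X Y : Multiset Formula) (cs : List (Dir × KTree))
      (d : Dir) (X' Y' : Multiset Formula) (cs' : List (Dir × KTree)),
    subt l t = some (.node X Y cs) → cs[k]? = some (d, .node X' Y' cs') →
    NodeOK (some (d, X, Y)) X' Y' cs')

lemma goodR_node {pi : Option (Dir × Multiset Formula × Multiset Formula)}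
    {X Y : Multiset Formula} {cs : List (Dir × KTree)}
    (h1 : NodeOK pi X Y cs)
    (h2 : ∀ d c, (d, c) ∈ cs → GoodR (some (d, X, Y)) c) :
    GoodR pi (.node X Y cs) := by
  constructor
  · intro X' Y' cs' he
    cases he
    exact h1
  · intro l k X₀ Y₀ cs₀ d X' Y' cs' hsub hget
    cases l with
    | nil =>
        simp only [subt_nil, Option.some.injEq] at hsub
        cases hsub
        exact ((h2 d _ (List.mem_of_getElem? hget)).1) _ _ _ rfl
    | cons j l' =>
        rw [subt_cons] at hsub
        rcases hj : cs[j]? with _ | ⟨d₁, c₁⟩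
        · rw [hj] at hsub; simp at hsub
        · rw [hj] at hsub
          simp only [Option.bind_some] at hsub
          have hm : (d₁, c₁) ∈ cs := List.mem_of_getElem? hj
          exact (h2 d₁ c₁ hm).2 l' k X₀ Y₀ cs₀ d X' Y' cs' hsub hget

/-- Accessibility relation of the countermodel extracted from a tree. -/
def KRel (T : KTree) (a b : List ℕ) : Prop :=
  (∃ (k : ℕ) (X Y : Multiset Formula) (cs : List (Dir × KTree)) (c : KTree),
      subt a T = some (.node X Y cs) ∧ cs[k]? = some (Dir.up, c) ∧ b = a ++ [k]) ∨
  (∃ (k : ℕ) (X Y : Multiset Formula) (cs : List (Dir × KTree)) (c : KTree),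
      subt b T = some (.node X Y cs) ∧ cs[k]? = some (Dir.dn, c) ∧ a = b ++ [k])

/-- Valuation of the countermodel. -/
def KVal (T : KTree) (a : List ℕ) (p : ℕ) : Prop :=
  ∃ (X Y : Multiset Formula) (cs : List (Dir × KTree)),
    subt a T = some (.node X Y cs) ∧ Formula.atom p ∈ X

lemma subt_child {T : KTree} {l : List ℕ} {X Y : Multiset Formula}
    {cs : List (Dir × KTree)} {k : ℕ} {d : Dir} {c : KTree}
    (hl : subt l T = some (.node X Y cs)) (hk : cs[k]? = some (d, c)) :
    subt (l ++ [k]) T = some c := by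
  rw [subt_append, hl, Option.bind_some, subt_cons, hk, Option.bind_some, subt_nil]

/-- Retrieve the saturation conditions at a node together with the parent data. -/
lemma nodeOK_of {T : KTree} (hg : GoodR none T) {l : List ℕ} {X Y : Multiset Formula}
    {cs : List (Dir × KTree)} (h : subt l T = some (.node X Y cs)) :
    ∃ pi, NodeOK pi X Y cs ∧
      ((l = [] ∧ pi = none) ∨
       (∃ (l₀ : List ℕ) (k : ℕ) (d : Dir) (X₀ Y₀ : Multiset Formula) (cs₀ : List (Dir × KTree)),
         l = l₀ ++ [k] ∧ subt l₀ T = some (.node X₀ Y₀ cs₀) ∧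
         cs₀[k]? = some (d, .node X Y cs) ∧ pi = some (d, X₀, Y₀))) := by
  rcases List.eq_nil_or_concat' l with rfl | ⟨l₀, k, rfl⟩
  · simp only [subt_nil, Option.some.injEq] at h
    exact ⟨none, hg.1 X Y cs h, Or.inl ⟨rfl, rfl⟩⟩
  · rw [subt_append] at h
    rcases h0 : subt l₀ T with _ | t₀
    · rw [h0] at h; simp at h
    · rw [h0] at h
      simp only [Option.bind_some] at h
      rcases t₀ with ⟨X₀, Y₀, cs₀⟩
      rw [subt_cons] at h
      rcases hk : cs₀[k]? with _ | ⟨d, c⟩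
      · rw [hk] at h; simp at h
      · rw [hk] at h
        simp only [Option.bind_some, subt_nil, Option.some.injEq] at h
        subst h
        exact ⟨some (d, X₀, Y₀),
          hg.2 l₀ k X₀ Y₀ cs₀ d X Y cs h0 hk,
          Or.inr ⟨l₀, k, d, X₀, Y₀, cs₀, rfl, h0, hk, rfl⟩⟩

/-- The truth lemma. -/
lemma truth {T : KTree} (hg : GoodR none T) :
    ∀ A : Formula, A.NoDia →
    ∀ (l : List ℕ) (X Y : Multiset Formula) (cs : List (Dir × KTree)),
      subt l T = some (.node X Y cs) →
      (A ∈ X → Force (KRel T) (KVal T) l A) ∧ (A ∈ Y → ¬ Force (KRel T) (KVal T) l A) := by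
  intro A
  induction A with
  | atom p =>
      intro _ l X Y cs h
      constructor
      · intro hX
        exact ⟨X, Y, cs, h, hX⟩
      · intro hY hF
        rcases hF with ⟨X', Y', cs', h', hp⟩
        rw [h] at h'
        rcases h' with ⟨⟩
        rcases nodeOK_of hg h with ⟨pi, hok, -⟩
        exact hok.noid p hp hY
  | bot =>
      intro _ l X Y cs h
      constructor
      · intro hX
        rcases nodeOK_of hg h with ⟨pi, hok, -⟩
        exact absurd hX hok.nobot
      · intro _ hF
        exact hF
  | imp A B ihA ihB =>
      intro hnd l X Y cs h
      rcases nodeOK_of hg h with ⟨pi, hok, -⟩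
      constructor
      · intro hX
        rcases hok.impX A B hX with hB | hA
        · intro _
          exact (ihB hnd.2 l X Y cs h).1 hB
        · intro hFA
          exact absurd hFA ((ihA hnd.1 l X Y cs h).2 hA)
      · intro hY hF
        rcases hok.impY A B hY with ⟨hA, hB⟩
        exact (ihB hnd.2 l X Y cs h).2 hB (hF ((ihA hnd.1 l X Y cs h).1 hA))
  | box A ih =>
      intro hnd l X Y cs h
      rcases nodeOK_of hg h with ⟨pi, hok, hpi⟩
      constructor
      · intro hX l' hR
        rcases hR with ⟨k, X₁, Y₁, cs₁, c, hs, hk, rfl⟩ | ⟨k, X₁, Y₁, cs₁, c, hs, hk, he⟩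
        · rw [h] at hs; rcases hs with ⟨⟩
          have hc := subt_child h hk
          rcases c with ⟨Xc, Yc, csc⟩
          exact (ih hnd _ _ _ _ hc).1 (hok.boxX₁ A k _ hX hk)
        · -- l = l' ++ [k]; the parent l' is a successor
          rcases hpi with ⟨rfl, -⟩ | ⟨l₀, k₀, d, X₀, Y₀, cs₀, heq, hs₀, hk₀, rfl⟩
          · exact absurd he.symm (by simp)
          · -- identify (l', k) with (l₀, k₀)
            obtain ⟨rfl, hk2⟩ := List.append_inj' (heq.symm.trans he) rfl
            obtain rfl : k = k₀ := by simpa using hk2.symm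
            rw [hs₀] at hs; rcases hs with ⟨⟩
            rw [hk₀] at hk; rcases hk with ⟨⟩
            exact (ih hnd _ _ _ _ hs₀).1 (hok.boxX₂ A _ _ hX rfl)
      · intro hY hF
        rcases hok.boxY A hY with ⟨k, c, hk, hA⟩ | ⟨P, Q, hpieq, hA⟩
        · have hc := subt_child h hk
          rcases c with ⟨Xc, Yc, csc⟩
          have hR : KRel T l (l ++ [k]) := Or.inl ⟨k, X, Y, cs, _, h, hk, rfl⟩
          exact (ih hnd _ _ _ _ hc).2 hA (hF _ hR)
        · rcases hpi with ⟨-, rfl⟩ | ⟨l₀, k₀, d, X₀, Y₀, cs₀, heq, hs₀, hk₀, hpieq'⟩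
          · exact nomatch hpieq
          · rw [hpieq'] at hpieq
            rcases hpieq with ⟨⟩
            have hR : KRel T l l₀ := Or.inr ⟨k₀, _, _, _, _, hs₀, hk₀, heq⟩
            exact (ih hnd _ _ _ _ hs₀).2 hA (hF _ hR)
  | dia A ih => intro hnd; exact absurd hnd (by simp [Formula.NoDia])
  | bbox A ih =>
      intro hnd l X Y cs h
      rcases nodeOK_of hg h with ⟨pi, hok, hpi⟩
      constructor
      · intro hX l' hR
        rcases hR with ⟨k, X₁, Y₁, cs₁, c, hs, hk, he⟩ | ⟨k, X₁, Y₁, cs₁, c, hs, hk, rfl⟩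
        ·
          -- here hR : KRel T l' l, first disjunct: subt l' = node, child k up, l = l' ++ [k]
          rcases hpi with ⟨rfl, -⟩ | ⟨l₀, k₀, d, X₀, Y₀, cs₀, heq, hs₀, hk₀, rfl⟩
          · exact absurd he.symm (by simp)
          · obtain ⟨rfl, hk2⟩ := List.append_inj' (heq.symm.trans he) rfl
            obtain rfl : k = k₀ := by simpa using hk2.symm
            rw [hs₀] at hs; rcases hs with ⟨⟩
            rw [hk₀] at hk; rcases hk with ⟨⟩
            exact (ih hnd _ _ _ _ hs₀).1 (hok.bboxX₂ A _ _ hX rfl)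
        · rw [h] at hs; rcases hs with ⟨⟩
          have hc := subt_child h hk
          rcases c with ⟨Xc, Yc, csc⟩
          exact (ih hnd _ _ _ _ hc).1 (hok.bboxX₁ A k _ hX hk)
      · intro hY hF
        rcases hok.bboxY A hY with ⟨k, c, hk, hA⟩ | ⟨P, Q, hpieq, hA⟩
        · have hc := subt_child h hk
          rcases c with ⟨Xc, Yc, csc⟩
          have hR : KRel T (l ++ [k]) l := Or.inr ⟨k, X, Y, cs, _, h, hk, rfl⟩
          exact (ih hnd _ _ _ _ hc).2 hA (hF _ hR)
        · rcases hpi with ⟨-, rfl⟩ | ⟨l₀, k₀, d, X₀, Y₀, cs₀, heq, hs₀, hk₀, hpieq'⟩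
          · exact nomatch hpieq
          · rw [hpieq'] at hpieq
            rcases hpieq with ⟨⟩
            have hR : KRel T l₀ l := Or.inl ⟨k₀, _, _, _, _, hs₀, hk₀, heq⟩
            exact (ih hnd _ _ _ _ hs₀).2 hA (hF _ hR)
  | bdia A ih => intro hnd; exact absurd hnd (by simp [Formula.NoDia])



/-! ### Measure -/

abbrev Par := Option (Multiset Formula × Multiset Formula × Dir)

def parInfo : Par → Option (Dir × Multiset Formula × Multiset Formula)
  | none => none
  | some (P, Q, d) => some (d, P, Q)

def cap (CL : Finset Formula) (s : Multiset Formula) : ℕ := CL.card - s.toFinset.card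

lemma cap_cons_le (CL : Finset Formula) (s : Multiset Formula) (e : Formula) :
    cap CL (e ::ₘ s) ≤ cap CL s := by
  unfold cap
  rw [Multiset.toFinset_cons]
  have := Finset.card_le_card (Finset.subset_insert e s.toFinset)
  omega

lemma cap_cons_lt {CL : Finset Formula} {s : Multiset Formula} {e : Formula}
    (h1 : s.toFinset ⊆ CL) (he : e ∈ CL) (hne : e ∉ s) : cap CL (e ::ₘ s) < cap CL s := by
  unfold cap
  rw [Multiset.toFinset_cons]
  have hnef : e ∉ s.toFinset := by simpa using hne
  have h2 : (insert e s.toFinset).card ≤ CL.card :=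
    Finset.card_le_card (Finset.insert_subset he h1)
  rw [Finset.card_insert_of_notMem hnef] at h2 ⊢
  omega

def wform : Formula → Bool
  | .box _ => true
  | .bbox _ => true
  | _ => false

def unw (Y : Multiset Formula) (ws : Finset Formula) : ℕ :=
  ((Y.toFinset.filter (fun F => wform F)) \ ws).card

lemma unw_le {CL : Finset Formula} {Y : Multiset Formula} (h : Y.toFinset ⊆ CL)
    (ws : Finset Formula) : unw Y ws ≤ CL.card :=
  Finset.card_le_card ((Finset.sdiff_subset.trans (Finset.filter_subset _ _)).trans h)

lemma unw_insert_lt {Y : Multiset Formula} {ws : Finset Formula} {F : Formula}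
    (hF : F ∈ Y) (hw : wform F) (hws : F ∉ ws) : unw Y (insert F ws) < unw Y ws := by
  apply Finset.card_lt_card
  have h1 : (Y.toFinset.filter (fun F => wform F)) \ insert F ws ⊆
      (Y.toFinset.filter (fun F => wform F)) \ ws := by
    intro x hx
    simp only [Finset.mem_sdiff, Finset.mem_insert] at hx ⊢
    exact ⟨hx.1, fun h => hx.2 (Or.inr h)⟩
  refine (Finset.ssubset_iff_of_subset h1).mpr ⟨F, ?_, ?_⟩
  · simp only [Finset.mem_sdiff, Finset.mem_filter, Multiset.mem_toFinset]
    exact ⟨⟨hF, hw⟩, hws⟩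
  · simp

def pcap (CL : Finset Formula) : Par → ℕ
  | none => 0
  | some (P, Q, _) => cap CL P + cap CL Q

def meas (CL : Finset Formula) (X Y : Multiset Formula) (par : Par) (ws : Finset Formula) : ℕ :=
  (CL.card + 1) * (cap CL X + cap CL Y + pcap CL par) + unw Y ws

lemma meas_lt {CL : Finset Formula} {X Y X' Y' : Multiset Formula} {par par' : Par}
    {ws ws' : Finset Formula} (hY' : Y'.toFinset ⊆ CL)
    (hlt : cap CL X' + cap CL Y' + pcap CL par' < cap CL X + cap CL Y + pcap CL par) :
    meas CL X' Y' par' ws' < meas CL X Y par ws := by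
  unfold meas
  have h1 : unw Y' ws' ≤ CL.card := unw_le hY' ws'
  have h2 : cap CL X' + cap CL Y' + pcap CL par' + 1 ≤ cap CL X + cap CL Y + pcap CL par := hlt
  calc (CL.card + 1) * (cap CL X' + cap CL Y' + pcap CL par') + unw Y' ws'
      < (CL.card + 1) * (cap CL X' + cap CL Y' + pcap CL par') + (CL.card + 1) := by omega
    _ = (CL.card + 1) * (cap CL X' + cap CL Y' + pcap CL par' + 1) := by ring
    _ ≤ (CL.card + 1) * (cap CL X + cap CL Y + pcap CL par) := Nat.mul_le_mul_left _ h2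
    _ ≤ (CL.card + 1) * (cap CL X + cap CL Y + pcap CL par) + unw Y ws := Nat.le_add_right _ _

lemma meas_lt_ws {CL : Finset Formula} {X Y : Multiset Formula} {par : Par}
    {ws : Finset Formula} {F : Formula} (hF : F ∈ Y) (hw : wform F) (hws : F ∉ ws) :
    meas CL X Y par (insert F ws) < meas CL X Y par ws := by
  unfold meas
  have := unw_insert_lt hF hw hws
  omega

/-! ### Witness bookkeeping -/

def childOKbox (X Y : Multiset Formula) (A : Formula) (c : KTree) : Prop :=
  GoodR (some (Dir.up, X, Y)) c ∧ A ∈ rootY c ∧ ∀ B, Formula.box B ∈ X → B ∈ rootX c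

def childOKbbox (X Y : Multiset Formula) (A : Formula) (c : KTree) : Prop :=
  GoodR (some (Dir.dn, X, Y)) c ∧ A ∈ rootY c ∧ ∀ B, Formula.bbox B ∈ X → B ∈ rootX c

def WS (X Y : Multiset Formula) (ws : Finset Formula) : Prop :=
  ∀ F ∈ ws, F ∈ Y ∧
    ((∃ A c, F = Formula.box A ∧ childOKbox X Y A c) ∨
     (∃ A c, F = Formula.bbox A ∧ childOKbbox X Y A c))

lemma exists_children (X Y : Multiset Formula) (ws : Finset Formula) (h : WS X Y ws) :
    ∃ cs : List (Dir × KTree),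
      (∀ d c, (d, c) ∈ cs → GoodR (some (d, X, Y)) c ∧
        (d = Dir.up → ∀ B, Formula.box B ∈ X → B ∈ rootX c) ∧
        (d = Dir.dn → ∀ B, Formula.bbox B ∈ X → B ∈ rootX c)) ∧
      (∀ A, Formula.box A ∈ ws → ∃ (k : ℕ) (c : KTree),
        cs[k]? = some (Dir.up, c) ∧ A ∈ rootY c) ∧
      (∀ A, Formula.bbox A ∈ ws → ∃ (k : ℕ) (c : KTree),
        cs[k]? = some (Dir.dn, c) ∧ A ∈ rootY c) := by
  classical
  induction ws using Finset.induction_on with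
  | empty => exact ⟨[], by simp, by simp, by simp⟩
  | @insert F s hFs ih =>
      have hF := h F (Finset.mem_insert_self F s)
      obtain ⟨cs, hmem, hbox, hbbox⟩ :=
        ih (fun F' hF' => h F' (Finset.mem_insert_of_mem hF'))
      rcases hF.2 with ⟨A, c, rfl, hok⟩ | ⟨A, c, rfl, hok⟩
      · refine ⟨(Dir.up, c) :: cs, ?_, ?_, ?_⟩
        · intro d c' hc'
          rcases List.mem_cons.mp hc' with he | he
          · rcases he with ⟨⟩
            exact ⟨hok.1, fun _ B hB => hok.2.2 B hB, fun hd => Dir.noConfusion hd⟩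
          · exact hmem d c' he
        · intro A' hA'
          rcases Finset.mem_insert.mp hA' with he | he
          · obtain rfl : A' = A := by injection he
            exact ⟨0, c, rfl, hok.2.1⟩
          · obtain ⟨k, c', hk, hA2⟩ := hbox A' he
            exact ⟨k + 1, c', by simpa using hk, hA2⟩
        · intro A' hA'
          rcases Finset.mem_insert.mp hA' with he | he
          · exact absurd he (by simp)
          · obtain ⟨k, c', hk, hA2⟩ := hbbox A' he
            exact ⟨k + 1, c', by simpa using hk, hA2⟩
      · refine ⟨(Dir.dn, c) :: cs, ?_, ?_, ?_⟩
        · intro d c' hc'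
          rcases List.mem_cons.mp hc' with he | he
          · rcases he with ⟨⟩
            exact ⟨hok.1, fun hd => Dir.noConfusion hd, fun _ B hB => hok.2.2 B hB⟩
          · exact hmem d c' he
        · intro A' hA'
          rcases Finset.mem_insert.mp hA' with he | he
          · exact absurd he (by simp)
          · obtain ⟨k, c', hk, hA2⟩ := hbox A' he
            exact ⟨k + 1, c', by simpa using hk, hA2⟩
        · intro A' hA'
          rcases Finset.mem_insert.mp hA' with he | he
          · obtain rfl : A' = A := by injection he
            exact ⟨0, c, rfl, hok.2.1⟩
          · obtain ⟨k, c', hk, hA2⟩ := hbbox A' he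
            exact ⟨k + 1, c', by simpa using hk, hA2⟩

/-! ### Result of saturating one node -/

def Extras (par : Par) (X : Multiset Formula) : Prop :=
  ∀ P Q d, par = some (P, Q, d) →
    (∀ B, d = Dir.up → Formula.box B ∈ P → B ∈ X) ∧
    (∀ B, d = Dir.dn → Formula.bbox B ∈ P → B ∈ X)

def Concl (CL : Finset Formula) (r : ℕ) (G : Ctx) (par : Par) (X Y : Multiset Formula) : Prop :=
  (∃ P Q d P' Q', par = some (P, Q, d) ∧ P ≤ P' ∧ Q ≤ Q' ∧
     P.toFinset.card + Q.toFinset.card < P'.toFinset.card + Q'.toFinset.card ∧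
     (∀ A ∈ P', A ∈ CL ∧ mdepth A ≤ r + 1) ∧ (∀ A ∈ Q', A ∈ CL ∧ mdepth A ≤ r + 1) ∧
     ¬ Deriv (plug G (.single P' Q'))) ∨
  (∃ X' Y' cs, X ≤ X' ∧ Y ≤ Y' ∧
     ¬ Deriv (plug (G ++ par.toList) (.single X' Y')) ∧
     GoodR (parInfo par) (.node X' Y' cs) ∧ Extras par X')

lemma concl_mono {CL : Finset Formula} {r : ℕ} {G : Ctx} {par : Par}
    {X Y X₁ Y₁ : Multiset Formula} (hX : X ≤ X₁) (hY : Y ≤ Y₁)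
    (h : Concl CL r G par X₁ Y₁) : Concl CL r G par X Y := by
  rcases h with h | ⟨X', Y', cs, h1, h2, h3⟩
  · exact Or.inl h
  · exact Or.inr ⟨X', Y', cs, hX.trans h1, hY.trans h2, h3⟩

lemma parToList_some (x : Multiset Formula × Multiset Formula × Dir) :
    (some x : Par).toList = [x] := rfl

/-- The main construction: saturating one node of the countermodel. -/
theorem build : ∀ r m : ℕ, ∀ (CL : Finset Formula) (G : Ctx) (par : Par)
    (X Y : Multiset Formula) (ws : Finset Formula),
    SC CL → (∀ A ∈ CL, Formula.NoDia A) →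
    (par = none → G = []) →
    (∀ A ∈ X, A ∈ CL ∧ mdepth A ≤ r) →
    (∀ A ∈ Y, A ∈ CL ∧ mdepth A ≤ r) →
    (∀ P Q d, par = some (P, Q, d) → ∀ A, (A ∈ P ∨ A ∈ Q) → A ∈ CL ∧ mdepth A ≤ r + 1) →
    ¬ Deriv (plug (G ++ par.toList) (.single X Y)) →
    WS X Y ws →
    meas CL X Y par ws ≤ m →
    Concl CL r G par X Y := by
  intro r
  induction r using Nat.strong_induction_on with
  | _ r IHr =>
  intro m
  induction m using Nat.strong_induction_on with
  | _ m IHm =>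
  intro CL G par X Y ws hSC hND0 hGnil hXc hYc hPQc hD hws hm
  classical
  have hXsub : X.toFinset ⊆ CL := fun a ha => (hXc a (Multiset.mem_toFinset.mp ha)).1
  have hYsub : Y.toFinset ⊆ CL := fun a ha => (hYc a (Multiset.mem_toFinset.mp ha)).1
  have hWSempty : ∀ X₀ Y₀ : Multiset Formula, WS X₀ Y₀ ∅ :=
    fun _ _ F hF => absurd hF (Finset.notMem_empty F)
  -- Task T1 : right implication
  by_cases h1 : ∃ A B, Formula.imp A B ∈ Y ∧ ¬(A ∈ X ∧ B ∈ Y)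
  · obtain ⟨A, B, hAB, hnab⟩ := h1
    obtain ⟨hACL, hBCL⟩ := hSC.impC A B (hYc _ hAB).1
    have hdep : mdepth (Formula.imp A B) ≤ r := (hYc _ hAB).2
    have hprem : ¬ Deriv (plug (G ++ par.toList) (.single (A ::ₘ X) (B ::ₘ Y))) := by
      intro hd
      have h0 := Deriv.impR (G ++ par.toList) X (Y.erase (Formula.imp A B)) A B
      rw [Multiset.cons_erase hAB] at h0
      exact hD (h0 hd)
    have hXc' : ∀ C ∈ (A ::ₘ X), C ∈ CL ∧ mdepth C ≤ r := by
      intro C hC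
      rcases Multiset.mem_cons.mp hC with rfl | hC
      · exact ⟨hACL, le_trans (le_max_left _ _) hdep⟩
      · exact hXc C hC
    have hYc' : ∀ C ∈ (B ::ₘ Y), C ∈ CL ∧ mdepth C ≤ r := by
      intro C hC
      rcases Multiset.mem_cons.mp hC with rfl | hC
      · exact ⟨hBCL, le_trans (le_max_right _ _) hdep⟩
      · exact hYc C hC
    have hYsub' : (B ::ₘ Y).toFinset ⊆ CL :=
      fun a ha => (hYc' a (Multiset.mem_toFinset.mp ha)).1
    have hlt : meas CL (A ::ₘ X) (B ::ₘ Y) par ∅ < meas CL X Y par ws := by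
      apply meas_lt hYsub'
      have e1 : cap CL (A ::ₘ X) ≤ cap CL X := cap_cons_le CL X A
      have e2 : cap CL (B ::ₘ Y) ≤ cap CL Y := cap_cons_le CL Y B
      rcases not_and_or.mp hnab with hA | hB
      · have := cap_cons_lt hXsub hACL hA
        omega
      · have := cap_cons_lt hYsub hBCL hB
        omega
    exact concl_mono (Multiset.le_cons_self X A) (Multiset.le_cons_self Y B)
      (IHm _ (lt_of_lt_of_le hlt hm) CL G par _ _ ∅ hSC hND0 hGnil hXc' hYc' hPQc hprem
        (hWSempty _ _) (le_refl _))
  -- Task T2 : left implication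
  by_cases h2 : ∃ A B, Formula.imp A B ∈ X ∧ B ∉ X ∧ A ∉ Y
  · obtain ⟨A, B, hAB, hBX, hAY⟩ := h2
    obtain ⟨hACL, hBCL⟩ := hSC.impC A B (hXc _ hAB).1
    have hdep : mdepth (Formula.imp A B) ≤ r := (hXc _ hAB).2
    have hkey : ¬ Deriv (plug (G ++ par.toList) (.single (B ::ₘ X) Y)) ∨
        ¬ Deriv (plug (G ++ par.toList) (.single X (A ::ₘ Y))) := by
      by_contra hc
      rw [not_or, not_not, not_not] at hc
      have h0 := Deriv.impL (G ++ par.toList) (X.erase (Formula.imp A B)) Y A B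
      rw [Multiset.cons_erase hAB] at h0
      exact hD (h0 hc.1 hc.2)
    rcases hkey with hprem | hprem
    · have hXc' : ∀ C ∈ (B ::ₘ X), C ∈ CL ∧ mdepth C ≤ r := by
        intro C hC
        rcases Multiset.mem_cons.mp hC with rfl | hC
        · exact ⟨hBCL, le_trans (le_max_right _ _) hdep⟩
        · exact hXc C hC
      have hlt : meas CL (B ::ₘ X) Y par ∅ < meas CL X Y par ws := by
        apply meas_lt hYsub
        have := cap_cons_lt hXsub hBCL hBX
        omega
      exact concl_mono (Multiset.le_cons_self X B) (le_refl Y)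
        (IHm _ (lt_of_lt_of_le hlt hm) CL G par _ _ ∅ hSC hND0 hGnil hXc' hYc hPQc hprem
          (hWSempty _ _) (le_refl _))
    · have hYc' : ∀ C ∈ (A ::ₘ Y), C ∈ CL ∧ mdepth C ≤ r := by
        intro C hC
        rcases Multiset.mem_cons.mp hC with rfl | hC
        · exact ⟨hACL, le_trans (le_max_left _ _) hdep⟩
        · exact hYc C hC
      have hYsub' : (A ::ₘ Y).toFinset ⊆ CL :=
        fun a ha => (hYc' a (Multiset.mem_toFinset.mp ha)).1
      have hlt : meas CL X (A ::ₘ Y) par ∅ < meas CL X Y par ws := by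
        apply meas_lt hYsub'
        have := cap_cons_lt hYsub hACL hAY
        omega
      exact concl_mono (le_refl X) (Multiset.le_cons_self Y A)
        (IHm _ (lt_of_lt_of_le hlt hm) CL G par _ _ ∅ hSC hND0 hGnil hXc hYc' hPQc hprem
          (hWSempty _ _) (le_refl _))
  -- Task T3 : transfer □ from an up-parent
  by_cases h3 : ∃ P Q B, par = some (P, Q, Dir.up) ∧ Formula.box B ∈ P ∧ B ∉ X
  · obtain ⟨P, Q, B, hpe, hBP, hBX⟩ := h3
    have hBCL : Formula.box B ∈ CL := (hPQc P Q Dir.up hpe _ (Or.inl hBP)).1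
    have hBCL' : B ∈ CL := hSC.boxC B hBCL
    have hdep : mdepth (Formula.box B) ≤ r + 1 := (hPQc P Q Dir.up hpe _ (Or.inl hBP)).2
    have hprem : ¬ Deriv (plug (G ++ par.toList) (.single (B ::ₘ X) Y)) := by
      intro hd
      rw [hpe, parToList_some _, plug_up] at hd
      have h0 := Deriv.boxL1 G (P.erase (Formula.box B)) Q X Y B
      rw [Multiset.cons_erase hBP] at h0
      apply hD
      rw [hpe, parToList_some _, plug_up]
      exact h0 hd
    have hXc' : ∀ C ∈ (B ::ₘ X), C ∈ CL ∧ mdepth C ≤ r := by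
      intro C hC
      rcases Multiset.mem_cons.mp hC with rfl | hC
      · refine ⟨hBCL', ?_⟩
        have : mdepth (Formula.box C) = mdepth C + 1 := rfl
        omega
      · exact hXc C hC
    have hlt : meas CL (B ::ₘ X) Y par ∅ < meas CL X Y par ws := by
      apply meas_lt hYsub
      have := cap_cons_lt hXsub hBCL' hBX
      omega
    exact concl_mono (Multiset.le_cons_self X B) (le_refl Y)
      (IHm _ (lt_of_lt_of_le hlt hm) CL G par _ _ ∅ hSC hND0 hGnil hXc' hYc hPQc hprem
        (hWSempty _ _) (le_refl _))
  -- Task T4 : transfer ■ from a dn-parent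
  by_cases h4 : ∃ P Q B, par = some (P, Q, Dir.dn) ∧ Formula.bbox B ∈ P ∧ B ∉ X
  · obtain ⟨P, Q, B, hpe, hBP, hBX⟩ := h4
    have hBCL : Formula.bbox B ∈ CL := (hPQc P Q Dir.dn hpe _ (Or.inl hBP)).1
    have hBCL' : B ∈ CL := hSC.bboxC B hBCL
    have hdep : mdepth (Formula.bbox B) ≤ r + 1 := (hPQc P Q Dir.dn hpe _ (Or.inl hBP)).2
    have hprem : ¬ Deriv (plug (G ++ par.toList) (.single (B ::ₘ X) Y)) := by
      intro hd
      rw [hpe, parToList_some _, plug_dn] at hd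
      have h0 := Deriv.bboxL1 G (P.erase (Formula.bbox B)) Q X Y B
      rw [Multiset.cons_erase hBP] at h0
      apply hD
      rw [hpe, parToList_some _, plug_dn]
      exact h0 hd
    have hXc' : ∀ C ∈ (B ::ₘ X), C ∈ CL ∧ mdepth C ≤ r := by
      intro C hC
      rcases Multiset.mem_cons.mp hC with rfl | hC
      · refine ⟨hBCL', ?_⟩
        have : mdepth (Formula.bbox C) = mdepth C + 1 := rfl
        omega
      · exact hXc C hC
    have hlt : meas CL (B ::ₘ X) Y par ∅ < meas CL X Y par ws := by
      apply meas_lt hYsub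
      have := cap_cons_lt hXsub hBCL' hBX
      omega
    exact concl_mono (Multiset.le_cons_self X B) (le_refl Y)
      (IHm _ (lt_of_lt_of_le hlt hm) CL G par _ _ ∅ hSC hND0 hGnil hXc' hYc hPQc hprem
        (hWSempty _ _) (le_refl _))
  -- Task T5 : feedback ■ to an up-parent
  by_cases h5 : ∃ P Q C, par = some (P, Q, Dir.up) ∧ Formula.bbox C ∈ X ∧ C ∉ P
  · obtain ⟨P, Q, C, hpe, hCX, hCP⟩ := h5
    have hCCL : C ∈ CL := hSC.bboxC C (hXc _ hCX).1
    have hdep : mdepth (Formula.bbox C) ≤ r := (hXc _ hCX).2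
    have hprem : ¬ Deriv (plug G (.single (C ::ₘ P) Q)) := by
      intro hd
      have h0 := Deriv.bboxL2 G P Q (X.erase (Formula.bbox C)) Y C hd
      rw [Multiset.cons_erase hCX] at h0
      exact hD (by rw [hpe, parToList_some _, plug_up]; exact h0)
    refine Or.inl ⟨P, Q, Dir.up, C ::ₘ P, Q, hpe, Multiset.le_cons_self _ _, le_refl _, ?_, ?_, ?_,
      hprem⟩
    · rw [Multiset.toFinset_cons, Finset.card_insert_of_notMem (by simpa using hCP)]
      omega
    · intro A hA
      rcases Multiset.mem_cons.mp hA with rfl | hA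
      · refine ⟨hCCL, ?_⟩
        have : mdepth (Formula.bbox A) = mdepth A + 1 := rfl
        omega
      · exact hPQc P Q Dir.up hpe A (Or.inl hA)
    · intro A hA
      exact hPQc P Q Dir.up hpe A (Or.inr hA)
  -- Task T6 : feedback □ to a dn-parent
  by_cases h6 : ∃ P Q C, par = some (P, Q, Dir.dn) ∧ Formula.box C ∈ X ∧ C ∉ P
  · obtain ⟨P, Q, C, hpe, hCX, hCP⟩ := h6
    have hCCL : C ∈ CL := hSC.boxC C (hXc _ hCX).1
    have hdep : mdepth (Formula.box C) ≤ r := (hXc _ hCX).2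
    have hprem : ¬ Deriv (plug G (.single (C ::ₘ P) Q)) := by
      intro hd
      have h0 := Deriv.boxL2 G P Q (X.erase (Formula.box C)) Y C hd
      rw [Multiset.cons_erase hCX] at h0
      exact hD (by rw [hpe, parToList_some _, plug_dn]; exact h0)
    refine Or.inl ⟨P, Q, Dir.dn, C ::ₘ P, Q, hpe, Multiset.le_cons_self _ _, le_refl _, ?_, ?_, ?_,
      hprem⟩
    · rw [Multiset.toFinset_cons, Finset.card_insert_of_notMem (by simpa using hCP)]
      omega
    · intro A hA
      rcases Multiset.mem_cons.mp hA with rfl | hA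
      · refine ⟨hCCL, ?_⟩
        have : mdepth (Formula.box A) = mdepth A + 1 := rfl
        omega
      · exact hPQc P Q Dir.dn hpe A (Or.inl hA)
    · intro A hA
      exact hPQc P Q Dir.dn hpe A (Or.inr hA)
  -- Task T7 : witness □ on the right
  by_cases h7 : ∃ A, Formula.box A ∈ Y ∧ Formula.box A ∉ ws ∧
      ¬∃ P Q, par = some (P, Q, Dir.dn) ∧ A ∈ Q
  · obtain ⟨A, hAY, hAws, hAQ⟩ := h7
    have hACL : A ∈ CL := hSC.boxC A (hYc _ hAY).1
    have hrA : mdepth A + 1 ≤ r := (hYc _ hAY).2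
    have hstep : Concl CL r G par X Y ∨
        ¬ Deriv (plug ((G ++ par.toList) ++ [(X, Y, Dir.up)]) (.single 0 {A})) := by
      rcases par with _ | ⟨P, Q, d⟩
      · right
        have hG0 : G = [] := hGnil rfl
        subst hG0
        intro hd
        have h0 := Deriv.boxR2 ([] ++ (none : Par).toList) X (Y.erase (Formula.box A)) A
          (by intro hc; simp [lastDir] at hc) ?_
        · rw [Multiset.cons_erase hAY] at h0
          exact hD h0
        · rw [Multiset.cons_erase hAY, ← plug_up]
          exact hd
      · cases d
        · right
          intro hd
          have h0 := Deriv.boxR2 (G ++ (some (P, Q, Dir.up) : Par).toList) X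
            (Y.erase (Formula.box A)) A
            (by rw [parToList_some _, lastDir_concat]; simp) ?_
          · rw [Multiset.cons_erase hAY] at h0
            exact hD h0
          · rw [Multiset.cons_erase hAY, ← plug_up]
            exact hd
        · by_cases hp1 : Deriv (plug G (.dn P (A ::ₘ Q) (.single X Y)))
          · right
            intro hd
            have h0 := Deriv.boxR1 G P Q X (Y.erase (Formula.box A)) A ?_ ?_
            · rw [Multiset.cons_erase hAY] at h0
              exact hD (by rw [parToList_some _, plug_dn]; exact h0)
            · rw [Multiset.cons_erase hAY]
              exact hp1
            · rw [Multiset.cons_erase hAY]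
              rw [parToList_some _,
                plug_up, plug_dn] at hd
              exact hd
          · left
            have hAQ' : A ∉ Q := fun h => hAQ ⟨P, Q, rfl, h⟩
            have hprem : ¬ Deriv (plug G (.single P (A ::ₘ Q))) := by
              intro hd
              exact hp1 (by rw [← plug_dn]; exact Deriv.ew G P (A ::ₘ Q) Dir.dn X Y hd)
            refine Or.inl ⟨P, Q, Dir.dn, P, A ::ₘ Q, rfl, le_refl _, Multiset.le_cons_self _ _,
              ?_, ?_, ?_, hprem⟩
            · rw [Multiset.toFinset_cons, Finset.card_insert_of_notMem (by simpa using hAQ')]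
              omega
            · intro B hB
              exact hPQc P Q Dir.dn rfl B (Or.inl hB)
            · intro B hB
              rcases Multiset.mem_cons.mp hB with rfl | hB
              · exact ⟨hACL, by omega⟩
              · exact hPQc P Q Dir.dn rfl B (Or.inr hB)
    rcases hstep with hdone | hprem
    · exact hdone
    · have hchild := IHr (r - 1) (by omega) (meas CL 0 {A} (some (X, Y, Dir.up)) ∅)
        CL (G ++ par.toList) (some (X, Y, Dir.up)) 0 {A} ∅ hSC hND0
        (fun h => nomatch h)
        (by intro B hB; exact absurd hB (Multiset.notMem_zero B))
        (by intro B hB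
            rw [Multiset.mem_singleton] at hB
            subst hB
            exact ⟨hACL, by omega⟩)
        (by intro P₀ Q₀ d₀ he B hB
            have he' : (X, Y, Dir.up) = (P₀, Q₀, d₀) := by injection he
            obtain ⟨rfl, rfl, rfl⟩ : X = P₀ ∧ Y = Q₀ ∧ Dir.up = d₀ := by
              refine ⟨congrArg Prod.fst he', ?_, ?_⟩
              · exact congrArg (fun p => p.2.1) he'
              · exact congrArg (fun p => p.2.2) he'
            rcases hB with hB | hB
            · have := hXc B hB
              exact ⟨this.1, by omega⟩
            · have := hYc B hB
              exact ⟨this.1, by omega⟩)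
        hprem (hWSempty _ _) (le_refl _)
      rcases hchild with ⟨P₀, Q₀, d₀, P', Q', he, hle1, hle2, hcard, hP', hQ', hD'⟩ |
        ⟨Xc, Yc, csc, hXcle, hYcle, hDc, hGood, hExtras⟩
      · have he' : (X, Y, Dir.up) = (P₀, Q₀, d₀) := by injection he
        obtain ⟨rfl, rfl, rfl⟩ : X = P₀ ∧ Y = Q₀ ∧ Dir.up = d₀ := by
          refine ⟨congrArg Prod.fst he', ?_, ?_⟩
          · exact congrArg (fun p => p.2.1) he'
          · exact congrArg (fun p => p.2.2) he'
        have hXc2 : ∀ B ∈ P', B ∈ CL ∧ mdepth B ≤ r := by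
          intro B hB
          have := hP' B hB
          exact ⟨this.1, by omega⟩
        have hYc2 : ∀ B ∈ Q', B ∈ CL ∧ mdepth B ≤ r := by
          intro B hB
          have := hQ' B hB
          exact ⟨this.1, by omega⟩
        have hP'sub : P'.toFinset ⊆ CL := fun a ha => (hXc2 a (Multiset.mem_toFinset.mp ha)).1
        have hQ'sub : Q'.toFinset ⊆ CL := fun a ha => (hYc2 a (Multiset.mem_toFinset.mp ha)).1
        have hlt : meas CL P' Q' par ∅ < meas CL X Y par ws := by
          apply meas_lt hQ'sub
          have e1 : X.toFinset.card ≤ P'.toFinset.card :=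
            Finset.card_le_card (Multiset.toFinset_subset.mpr (Multiset.subset_of_le hle1))
          have e2 : Y.toFinset.card ≤ Q'.toFinset.card :=
            Finset.card_le_card (Multiset.toFinset_subset.mpr (Multiset.subset_of_le hle2))
          have e3 : P'.toFinset.card ≤ CL.card := Finset.card_le_card hP'sub
          have e4 : Q'.toFinset.card ≤ CL.card := Finset.card_le_card hQ'sub
          unfold cap
          omega
        exact concl_mono hle1 hle2
          (IHm _ (lt_of_lt_of_le hlt hm) CL G par P' Q' ∅ hSC hND0 hGnil hXc2 hYc2 hPQc hD'
            (hWSempty _ _) (le_refl _))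
      · have hpay : childOKbox X Y A (.node Xc Yc csc) := by
          refine ⟨hGood, ?_, ?_⟩
          · exact Multiset.mem_of_le hYcle (Multiset.mem_singleton_self A)
          · intro B hB
            exact (hExtras X Y Dir.up rfl).1 B rfl hB
        have hws' : WS X Y (insert (Formula.box A) ws) := by
          intro F hF
          rcases Finset.mem_insert.mp hF with rfl | hF
          · exact ⟨hAY, Or.inl ⟨A, _, rfl, hpay⟩⟩
          · exact hws F hF
        have hlt : meas CL X Y par (insert (Formula.box A) ws) < meas CL X Y par ws :=
          meas_lt_ws hAY rfl hAws
        exact IHm _ (lt_of_lt_of_le hlt hm) CL G par X Y _ hSC hND0 hGnil hXc hYc hPQc hD hws'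
          (le_refl _)
  -- Task T8 : witness ■ on the right
  by_cases h8 : ∃ A, Formula.bbox A ∈ Y ∧ Formula.bbox A ∉ ws ∧
      ¬∃ P Q, par = some (P, Q, Dir.up) ∧ A ∈ Q
  · obtain ⟨A, hAY, hAws, hAQ⟩ := h8
    have hACL : A ∈ CL := hSC.bboxC A (hYc _ hAY).1
    have hrA : mdepth A + 1 ≤ r := (hYc _ hAY).2
    have hstep : Concl CL r G par X Y ∨
        ¬ Deriv (plug ((G ++ par.toList) ++ [(X, Y, Dir.dn)]) (.single 0 {A})) := by
      rcases par with _ | ⟨P, Q, d⟩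
      · right
        have hG0 : G = [] := hGnil rfl
        subst hG0
        intro hd
        have h0 := Deriv.bboxR2 ([] ++ (none : Par).toList) X (Y.erase (Formula.bbox A)) A
          (by intro hc; simp [lastDir] at hc) ?_
        · rw [Multiset.cons_erase hAY] at h0
          exact hD h0
        · rw [Multiset.cons_erase hAY, ← plug_dn]
          exact hd
      · cases d
        · by_cases hp1 : Deriv (plug G (.up P (A ::ₘ Q) (.single X Y)))
          · right
            intro hd
            have h0 := Deriv.bboxR1 G P Q X (Y.erase (Formula.bbox A)) A ?_ ?_
            · rw [Multiset.cons_erase hAY] at h0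
              exact hD (by rw [parToList_some _, plug_up]; exact h0)
            · rw [Multiset.cons_erase hAY]
              exact hp1
            · rw [Multiset.cons_erase hAY]
              rw [parToList_some _,
                plug_dn, plug_up] at hd
              exact hd
          · left
            have hAQ' : A ∉ Q := fun h => hAQ ⟨P, Q, rfl, h⟩
            have hprem : ¬ Deriv (plug G (.single P (A ::ₘ Q))) := by
              intro hd
              exact hp1 (by rw [← plug_up]; exact Deriv.ew G P (A ::ₘ Q) Dir.up X Y hd)
            refine Or.inl ⟨P, Q, Dir.up, P, A ::ₘ Q, rfl, le_refl _, Multiset.le_cons_self _ _,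
              ?_, ?_, ?_, hprem⟩
            · rw [Multiset.toFinset_cons, Finset.card_insert_of_notMem (by simpa using hAQ')]
              omega
            · intro B hB
              exact hPQc P Q Dir.up rfl B (Or.inl hB)
            · intro B hB
              rcases Multiset.mem_cons.mp hB with rfl | hB
              · exact ⟨hACL, by omega⟩
              · exact hPQc P Q Dir.up rfl B (Or.inr hB)
        · right
          intro hd
          have h0 := Deriv.bboxR2 (G ++ (some (P, Q, Dir.dn) : Par).toList) X
            (Y.erase (Formula.bbox A)) A
            (by rw [parToList_some _, lastDir_concat]; simp) ?_
          · rw [Multiset.cons_erase hAY] at h0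
            exact hD h0
          · rw [Multiset.cons_erase hAY, ← plug_dn]
            exact hd
    rcases hstep with hdone | hprem
    · exact hdone
    · have hchild := IHr (r - 1) (by omega) (meas CL 0 {A} (some (X, Y, Dir.dn)) ∅)
        CL (G ++ par.toList) (some (X, Y, Dir.dn)) 0 {A} ∅ hSC hND0
        (fun h => nomatch h)
        (by intro B hB; exact absurd hB (Multiset.notMem_zero B))
        (by intro B hB
            rw [Multiset.mem_singleton] at hB
            subst hB
            exact ⟨hACL, by omega⟩)
        (by intro P₀ Q₀ d₀ he B hB
            have he' : (X, Y, Dir.dn) = (P₀, Q₀, d₀) := by injection he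
            obtain ⟨rfl, rfl, rfl⟩ : X = P₀ ∧ Y = Q₀ ∧ Dir.dn = d₀ := by
              refine ⟨congrArg Prod.fst he', ?_, ?_⟩
              · exact congrArg (fun p => p.2.1) he'
              · exact congrArg (fun p => p.2.2) he'
            rcases hB with hB | hB
            · have := hXc B hB
              exact ⟨this.1, by omega⟩
            · have := hYc B hB
              exact ⟨this.1, by omega⟩)
        hprem (hWSempty _ _) (le_refl _)
      rcases hchild with ⟨P₀, Q₀, d₀, P', Q', he, hle1, hle2, hcard, hP', hQ', hD'⟩ |
        ⟨Xc, Yc, csc, hXcle, hYcle, hDc, hGood, hExtras⟩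
      · have he' : (X, Y, Dir.dn) = (P₀, Q₀, d₀) := by injection he
        obtain ⟨rfl, rfl, rfl⟩ : X = P₀ ∧ Y = Q₀ ∧ Dir.dn = d₀ := by
          refine ⟨congrArg Prod.fst he', ?_, ?_⟩
          · exact congrArg (fun p => p.2.1) he'
          · exact congrArg (fun p => p.2.2) he'
        have hXc2 : ∀ B ∈ P', B ∈ CL ∧ mdepth B ≤ r := by
          intro B hB
          have := hP' B hB
          exact ⟨this.1, by omega⟩
        have hYc2 : ∀ B ∈ Q', B ∈ CL ∧ mdepth B ≤ r := by
          intro B hB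
          have := hQ' B hB
          exact ⟨this.1, by omega⟩
        have hP'sub : P'.toFinset ⊆ CL := fun a ha => (hXc2 a (Multiset.mem_toFinset.mp ha)).1
        have hQ'sub : Q'.toFinset ⊆ CL := fun a ha => (hYc2 a (Multiset.mem_toFinset.mp ha)).1
        have hlt : meas CL P' Q' par ∅ < meas CL X Y par ws := by
          apply meas_lt hQ'sub
          have e1 : X.toFinset.card ≤ P'.toFinset.card :=
            Finset.card_le_card (Multiset.toFinset_subset.mpr (Multiset.subset_of_le hle1))
          have e2 : Y.toFinset.card ≤ Q'.toFinset.card :=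
            Finset.card_le_card (Multiset.toFinset_subset.mpr (Multiset.subset_of_le hle2))
          have e3 : P'.toFinset.card ≤ CL.card := Finset.card_le_card hP'sub
          have e4 : Q'.toFinset.card ≤ CL.card := Finset.card_le_card hQ'sub
          unfold cap
          omega
        exact concl_mono hle1 hle2
          (IHm _ (lt_of_lt_of_le hlt hm) CL G par P' Q' ∅ hSC hND0 hGnil hXc2 hYc2 hPQc hD'
            (hWSempty _ _) (le_refl _))
      · have hpay : childOKbbox X Y A (.node Xc Yc csc) := by
          refine ⟨hGood, ?_, ?_⟩
          · exact Multiset.mem_of_le hYcle (Multiset.mem_singleton_self A)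
          · intro B hB
            exact (hExtras X Y Dir.dn rfl).2 B rfl hB
        have hws' : WS X Y (insert (Formula.bbox A) ws) := by
          intro F hF
          rcases Finset.mem_insert.mp hF with rfl | hF
          · exact ⟨hAY, Or.inr ⟨A, _, rfl, hpay⟩⟩
          · exact hws F hF
        have hlt : meas CL X Y par (insert (Formula.bbox A) ws) < meas CL X Y par ws :=
          meas_lt_ws hAY rfl hAws
        exact IHm _ (lt_of_lt_of_le hlt hm) CL G par X Y _ hSC hND0 hGnil hXc hYc hPQc hD hws'
          (le_refl _)
  -- saturated: assemble the node
  obtain ⟨cs, hcs1, hcs2, hcs3⟩ := exists_children X Y ws hws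
  refine Or.inr ⟨X, Y, cs, le_refl _, le_refl _, hD, ?_, ?_⟩
  · apply goodR_node
    · constructor
      · intro hbot
        have h0 := Deriv.botL (G ++ par.toList) (X.erase Formula.bot) Y
        rw [Multiset.cons_erase hbot] at h0
        exact hD h0
      · intro p hpX hpY
        have h0 := Deriv.id (G ++ par.toList) (X.erase (Formula.atom p)) (Y.erase (Formula.atom p)) p
        rw [Multiset.cons_erase hpX, Multiset.cons_erase hpY] at h0
        exact hD h0
      · intro A hA
        rcases hA with hA | hA
        · exact hND0 A (hXc A hA).1
        · exact hND0 A (hYc A hA).1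
      · intro A B hAB
        by_contra hno
        rw [not_or] at hno
        exact h2 ⟨A, B, hAB, hno.1, hno.2⟩
      · intro A B hAB
        by_contra hno
        exact h1 ⟨A, B, hAB, hno⟩
      · intro A k c hA hk
        exact (hcs1 _ _ (List.mem_of_getElem? hk)).2.1 rfl A hA
      · intro A P Q hA hpi
        rcases hpe : par with _ | ⟨P₀, Q₀, d₀⟩
        · rw [hpe] at hpi; exact absurd hpi (by simp [parInfo])
        · rw [hpe] at hpi
          have heq : (d₀, P₀, Q₀) = (Dir.dn, P, Q) := by
            simpa [parInfo] using hpi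
          have hd' : d₀ = Dir.dn := congrArg Prod.fst heq
          have hP' : P₀ = P := congrArg (fun p => p.2.1) heq
          by_contra hAP
          exact h6 ⟨P₀, Q₀, A, by rw [hpe, hd'], hA, by rw [hP']; exact hAP⟩
      · intro A k c hA hk
        exact (hcs1 _ _ (List.mem_of_getElem? hk)).2.2 rfl A hA
      · intro A P Q hA hpi
        rcases hpe : par with _ | ⟨P₀, Q₀, d₀⟩
        · rw [hpe] at hpi; exact absurd hpi (by simp [parInfo])
        · rw [hpe] at hpi
          have heq : (d₀, P₀, Q₀) = (Dir.up, P, Q) := by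
            simpa [parInfo] using hpi
          have hd' : d₀ = Dir.up := congrArg Prod.fst heq
          have hP' : P₀ = P := congrArg (fun p => p.2.1) heq
          by_contra hAP
          exact h5 ⟨P₀, Q₀, A, by rw [hpe, hd'], hA, by rw [hP']; exact hAP⟩
      · intro A hA
        by_cases hwsA : Formula.box A ∈ ws
        · obtain ⟨k, c, hk, hAc⟩ := hcs2 A hwsA
          exact Or.inl ⟨k, c, hk, hAc⟩
        · have hex : ∃ P Q, par = some (P, Q, Dir.dn) ∧ A ∈ Q := by
            by_contra hq
            exact h7 ⟨A, hA, hwsA, hq⟩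
          obtain ⟨P, Q, hpe, hAQ⟩ := hex
          right
          exact ⟨P, Q, by rw [hpe]; rfl, hAQ⟩
      · intro A hA
        by_cases hwsA : Formula.bbox A ∈ ws
        · obtain ⟨k, c, hk, hAc⟩ := hcs3 A hwsA
          exact Or.inl ⟨k, c, hk, hAc⟩
        · have hex : ∃ P Q, par = some (P, Q, Dir.up) ∧ A ∈ Q := by
            by_contra hq
            exact h8 ⟨A, hA, hwsA, hq⟩
          obtain ⟨P, Q, hpe, hAQ⟩ := hex
          right
          exact ⟨P, Q, by rw [hpe]; rfl, hAQ⟩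
    · intro d c hdc
      exact (hcs1 d c hdc).1
  · intro P Q d hpe
    constructor
    · intro B hd hBP
      subst hd
      by_contra hBX
      exact h3 ⟨P, Q, B, hpe, hBP, hBX⟩
    · intro B hd hBP
      subst hd
      by_contra hBX
      exact h4 ⟨P, Q, B, hpe, hBP, hBX⟩


/-- Cut-free completeness of LNS_Kt: every valid formula built from atoms, ⊥,
→, □, ■ is derivable. -/
theorem lnskt_complete (φ : Formula) (hφ : φ.NoDia) (hv : Valid φ) :
    Deriv (LNS.single 0 {φ}) := by
  by_contra hD
  have hchild := build (mdepth φ) (meas (scl φ) 0 {φ} none ∅) (scl φ) [] none 0 {φ} ∅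
    (sc_scl φ) (noDia_scl φ hφ) (fun _ => rfl)
    (fun A hA => absurd hA (Multiset.notMem_zero A))
    (fun A hA => by
      rw [Multiset.mem_singleton] at hA
      subst hA
      exact ⟨mem_scl_self _, le_refl _⟩)
    (fun P Q d h => nomatch h)
    hD
    (fun F hF => absurd hF (Finset.notMem_empty F))
    (le_refl _)
  rcases hchild with ⟨P, Q, d, P', Q', he, _⟩ | ⟨X', Y', cs, _, hYle, _, hGood, _⟩
  · exact nomatch he
  · have hφY : φ ∈ Y' := Multiset.mem_of_le hYle (Multiset.mem_singleton_self φ)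
    have hT := truth (T := KTree.node X' Y' cs) hGood φ hφ [] X' Y' cs rfl
    exact (hT.2 hφY) (hv (List ℕ) ⟨[]⟩ (KRel _) (KVal _) [])
end
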